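/- Classical Cheeger inequality in the mean form: for the symmetric Laplacian Δ with eigenvalues 0 = λ_1 ≤ λ_2 ≤ …, if f is an eigenfunction of Δ with eigenvalue λ having at least 2 strong sign-graphs (which holds for any eigenfunction of λ_2 when λ_2 > 0), then (1/2)λ_2 ≤ ι_2 ≤ √(2λ_2), where ι_2 = min over nonempty proper Q ⊆ V of ∂(Q)/(2π(Q)(1−π(Q))). -/
import Mathlib

open Finset

set_option linter.unusedSectionVars false
set_option linter.unusedVariables false
set_option maxHeartbeats 1000000

/-- Outgoing boundary flow `∂(Q) = ∑_{u∈Q, v∉Q} K(u,v)π(u)`. -/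
noncomputable def dpart {V : Type*} [Fintype V] [DecidableEq V]
    (K : V → V → ℝ) (π : V → ℝ) (Q : Finset V) : ℝ :=
  ∑ u ∈ Q, ∑ v ∈ Qᶜ, K u v * π u

/-- `π(Q) = ∑_{u∈Q} π(u)`. -/
noncomputable def pim {V : Type*} (π : V → ℝ) (Q : Finset V) : ℝ :=
  ∑ u ∈ Q, π u

/-- The symmetric Laplacian `Δ = id − (K + K*)/2` acting on `π`-weighted functions. -/
noncomputable def DeltaOp {V : Type*} [Fintype V]
    (K : V → V → ℝ) (π : V → ℝ) (f : V → ℝ) : V → ℝ :=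
  fun u => f u - (∑ v, (K u v + K v u * π v / π u) * f v) / 2

/-- The mean Cheeger constant `ι₂ = min_Q ∂(Q)/(2π(Q)(1−π(Q)))`. -/
noncomputable def iota2 {V : Type*} [Fintype V] [DecidableEq V]
    (K : V → V → ℝ) (π : V → ℝ) : ℝ :=
  sInf {x : ℝ | ∃ Q : Finset V, Q.Nonempty ∧ Q ≠ Finset.univ ∧
    x = dpart K π Q / (2 * pim π Q * (1 - pim π Q))}

section CheegerAux

variable {V : Type*} [Fintype V] [DecidableEq V]

/-- symmetrized edge weight -/
noncomputable def symw (K : V → V → ℝ) (π : V → ℝ) (u v : V) : ℝ :=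
  (K u v * π u + K v u * π v) / 2

lemma symw_symm (K : V → V → ℝ) (π : V → ℝ) (u v : V) : symw K π u v = symw K π v u := by
  unfold symw; ring

lemma symw_nonneg (K : V → V → ℝ) (π : V → ℝ) (hK0 : ∀ u v, 0 ≤ K u v)
    (hπ : ∀ u, 0 < π u) (u v : V) : 0 ≤ symw K π u v := by
  unfold symw
  have := hK0 u v; have := hK0 v u; have := (hπ u).le; have := (hπ v).le
  positivity

lemma symw_rowsum (K : V → V → ℝ) (π : V → ℝ) (hK1 : ∀ u, ∑ v, K u v = 1)
    (hstat : ∀ v, ∑ u, π u * K u v = π v) (u : V) : ∑ v, symw K π u v = π u := by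
  unfold symw
  have h1 : ∑ v, K u v * π u = π u := by
    rw [← Finset.sum_mul, hK1 u, one_mul]
  have h2 : ∑ v, K v u * π v = π u := by
    calc ∑ v, K v u * π v = ∑ v, π v * K v u := by simp [mul_comm]
    _ = π u := hstat u
  rw [← Finset.sum_div, Finset.sum_add_distrib, h1, h2]
  ring

lemma symw_colsum (K : V → V → ℝ) (π : V → ℝ) (hK1 : ∀ u, ∑ v, K u v = 1)
    (hstat : ∀ v, ∑ u, π u * K u v = π v) (v : V) : ∑ u, symw K π u v = π v := by
  calc ∑ u, symw K π u v = ∑ u, symw K π v u := by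
        exact Finset.sum_congr rfl fun u _ => symw_symm K π u v
  _ = π v := symw_rowsum K π hK1 hstat v

lemma dpart_eq_symw (K : V → V → ℝ) (π : V → ℝ) (hK1 : ∀ u, ∑ v, K u v = 1)
    (hstat : ∀ v, ∑ u, π u * K u v = π v) (Q : Finset V) :
    dpart K π Q = ∑ u ∈ Q, ∑ v ∈ Qᶜ, symw K π u v := by
  have hout : ∀ u : V, ∑ v ∈ Qᶜ, K u v * π u = π u - ∑ v ∈ Q, K u v * π u := by
    intro u
    have h := Finset.sum_add_sum_compl Q (fun v => K u v * π u)
    have htot : ∑ v, K u v * π u = π u := by rw [← Finset.sum_mul, hK1 u, one_mul]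
    linarith [h, htot]
  have hin : ∀ u : V, ∑ v ∈ Qᶜ, K v u * π v = π u - ∑ v ∈ Q, K v u * π v := by
    intro u
    have h := Finset.sum_add_sum_compl Q (fun v => K v u * π v)
    have htot : ∑ v, K v u * π v = π u := by
      calc ∑ v, K v u * π v = ∑ v, π v * K v u := by simp [mul_comm]
      _ = π u := hstat u
    linarith [h, htot]
  have hswap : ∑ u ∈ Q, ∑ v ∈ Q, K v u * π v = ∑ u ∈ Q, ∑ v ∈ Q, K u v * π u :=
    Finset.sum_comm
  have h1 : dpart K π Q = pim π Q - ∑ u ∈ Q, ∑ v ∈ Q, K u v * π u := by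
    unfold dpart pim
    rw [← Finset.sum_sub_distrib]
    exact Finset.sum_congr rfl fun u _ => hout u
  have h2 : ∑ u ∈ Q, ∑ v ∈ Qᶜ, K v u * π v = pim π Q - ∑ u ∈ Q, ∑ v ∈ Q, K u v * π u := by
    rw [← hswap]
    unfold pim
    rw [← Finset.sum_sub_distrib]
    exact Finset.sum_congr rfl fun u _ => hin u
  have h3 : ∑ u ∈ Q, ∑ v ∈ Qᶜ, symw K π u v
      = (∑ u ∈ Q, ∑ v ∈ Qᶜ, K u v * π u + ∑ u ∈ Q, ∑ v ∈ Qᶜ, K v u * π v) / 2 := by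
    unfold symw
    rw [← Finset.sum_add_distrib]
    rw [Finset.sum_div]
    apply Finset.sum_congr rfl
    intro u _
    rw [← Finset.sum_add_distrib, Finset.sum_div]
  rw [h3, h2]
  have := h1
  unfold dpart at *
  linarith

lemma delta_pi (K : V → V → ℝ) (π : V → ℝ) (hπ : ∀ u, 0 < π u) (g : V → ℝ) (u : V) :
    DeltaOp K π g u * π u = g u * π u - ∑ v, symw K π u v * g v := by
  unfold DeltaOp symw
  have hπu : π u ≠ 0 := (hπ u).ne'
  have hterm : ∀ v : V, (K u v + K v u * π v / π u) * g v * π u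
      = (K u v * π u + K v u * π v) / 2 * g v * 2 := by
    intro v; field_simp; try ring
  have : (∑ v, (K u v + K v u * π v / π u) * g v) * π u
      = ∑ v, (K u v * π u + K v u * π v) / 2 * g v * 2 := by
    rw [Finset.sum_mul]
    exact Finset.sum_congr rfl fun v _ => hterm v
  have h2 : (∑ v, (K u v + K v u * π v / π u) * g v) * π u
      = 2 * ∑ v, (K u v * π u + K v u * π v) / 2 * g v := by
    rw [this, ← Finset.sum_mul]; ring
  nlinarith [h2]

lemma bilform (K : V → V → ℝ) (π : V → ℝ) (hπ : ∀ u, 0 < π u) (g : V → ℝ) :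
    ∑ u, DeltaOp K π g u * g u * π u
      = ∑ u, g u ^ 2 * π u - ∑ u, ∑ v, symw K π u v * g u * g v := by
  rw [← Finset.sum_sub_distrib]
  apply Finset.sum_congr rfl
  intro u _
  have h := delta_pi K π hπ g u
  have : DeltaOp K π g u * g u * π u = (DeltaOp K π g u * π u) * g u := by ring
  rw [this, h, sub_mul, Finset.sum_mul]
  have h4 : ∑ v, symw K π u v * g v * g u = ∑ v, symw K π u v * g u * g v := by
    apply Finset.sum_congr rfl; intro v _; ring
  rw [h4]; ring

lemma quadform (K : V → V → ℝ) (π : V → ℝ) (hπ : ∀ u, 0 < π u) (g : V → ℝ)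
    (hrow : ∀ u, ∑ v, symw K π u v = π u) (hcol : ∀ v, ∑ u, symw K π u v = π v) :
    ∑ u, DeltaOp K π g u * g u * π u
      = (1/2) * ∑ u, ∑ v, symw K π u v * (g u - g v) ^ 2 := by
  rw [bilform K π hπ g]
  have hexp : ∀ u v : V, symw K π u v * (g u - g v) ^ 2
      = symw K π u v * g u ^ 2 + symw K π u v * g v ^ 2 - 2 * (symw K π u v * g u * g v) := by
    intro u v; ring
  have h1 : ∑ u, ∑ v, symw K π u v * g u ^ 2 = ∑ u, g u ^ 2 * π u := by
    apply Finset.sum_congr rfl; intro u _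
    rw [← Finset.sum_mul, hrow u]; ring
  have h2 : ∑ u, ∑ v, symw K π u v * g v ^ 2 = ∑ u, g u ^ 2 * π u := by
    rw [Finset.sum_comm]
    apply Finset.sum_congr rfl; intro v _
    rw [← Finset.sum_mul, hcol v]; ring
  have : ∑ u, ∑ v, symw K π u v * (g u - g v) ^ 2
      = ∑ u, g u ^ 2 * π u + ∑ u, g u ^ 2 * π u
        - 2 * ∑ u, ∑ v, symw K π u v * g u * g v := by
    calc ∑ u, ∑ v, symw K π u v * (g u - g v) ^ 2
        = ∑ u, ∑ v, (symw K π u v * g u ^ 2 + symw K π u v * g v ^ 2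
            - 2 * (symw K π u v * g u * g v)) := by
          exact Finset.sum_congr rfl fun u _ => Finset.sum_congr rfl fun v _ => hexp u v
      _ = ∑ u, ∑ v, symw K π u v * g u ^ 2 + ∑ u, ∑ v, symw K π u v * g v ^ 2
            - 2 * ∑ u, ∑ v, symw K π u v * g u * g v := by
          simp only [Finset.sum_sub_distrib, Finset.sum_add_distrib, ← Finset.mul_sum]
      _ = _ := by rw [h1, h2]
  rw [this]; ring

lemma sum_ind_pairs (F : V → V → ℝ) (Q : Finset V) :
    ∑ u, ∑ v, (if u ∈ Q ∧ v ∉ Q then F u v else 0) = ∑ u ∈ Q, ∑ v ∈ Qᶜ, F u v := by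
  have inner : ∀ u : V, ∑ v, (if u ∈ Q ∧ v ∉ Q then F u v else 0)
      = if u ∈ Q then ∑ v ∈ Qᶜ, F u v else 0 := by
    intro u
    by_cases hu : u ∈ Q
    · simp only [hu, true_and, if_true]
      rw [show (∑ v, if v ∉ Q then F u v else 0) = ∑ v, if v ∈ Qᶜ then F u v else 0 by
        simp [Finset.mem_compl]]
      rw [Finset.sum_ite_mem, Finset.univ_inter]
    · simp [hu]
  rw [Finset.sum_congr rfl fun u _ => inner u]
  rw [Finset.sum_ite_mem, Finset.univ_inter]

lemma ind_quad (S : V → V → ℝ) (hSs : ∀ u v, S u v = S v u) (Q : Finset V) :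
    ∑ u, ∑ v, S u v * ((if u ∈ Q then (1:ℝ) else 0) - (if v ∈ Q then (1:ℝ) else 0)) ^ 2
      = 2 * ∑ u ∈ Q, ∑ v ∈ Qᶜ, S u v := by
  have key : ∀ u v : V, S u v * ((if u ∈ Q then (1:ℝ) else 0) - (if v ∈ Q then (1:ℝ) else 0)) ^ 2
      = (if u ∈ Q ∧ v ∉ Q then S u v else 0) + (if v ∈ Q ∧ u ∉ Q then S u v else 0) := by
    intro u v
    by_cases hu : u ∈ Q <;> by_cases hv : v ∈ Q <;> simp [hu, hv]
  calc ∑ u, ∑ v, S u v * ((if u ∈ Q then (1:ℝ) else 0) - (if v ∈ Q then (1:ℝ) else 0)) ^ 2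
      = ∑ u, ∑ v, ((if u ∈ Q ∧ v ∉ Q then S u v else 0) + (if v ∈ Q ∧ u ∉ Q then S u v else 0)) := by
        exact Finset.sum_congr rfl fun u _ => Finset.sum_congr rfl fun v _ => key u v
    _ = (∑ u, ∑ v, (if u ∈ Q ∧ v ∉ Q then S u v else 0))
        + ∑ u, ∑ v, (if v ∈ Q ∧ u ∉ Q then S u v else 0) := by
        simp only [Finset.sum_add_distrib]
    _ = (∑ u ∈ Q, ∑ v ∈ Qᶜ, S u v) + ∑ u ∈ Q, ∑ v ∈ Qᶜ, S u v := by
        rw [sum_ind_pairs]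
        congr 1
        rw [Finset.sum_comm]
        rw [show (∑ v, ∑ u, if v ∈ Q ∧ u ∉ Q then S u v else 0)
            = ∑ v, ∑ u, if v ∈ Q ∧ u ∉ Q then S v u else 0 by
          exact Finset.sum_congr rfl fun v _ => Finset.sum_congr rfl fun u _ => by
            by_cases h : v ∈ Q ∧ u ∉ Q <;> simp [h, hSs v u]]
        exact sum_ind_pairs (fun v u => S v u) Q
    _ = 2 * ∑ u ∈ Q, ∑ v ∈ Qᶜ, S u v := by ring

lemma sweep_lemma (S : V → V → ℝ) (π : V → ℝ)
    (hS0 : ∀ u v, 0 ≤ S u v) (hSs : ∀ u v, S u v = S v u)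
    (hπ0 : ∀ u, 0 ≤ π u) (c : ℝ) (hc : 0 ≤ c) :
    ∀ (n : ℕ) (g : V → ℝ), (univ.filter fun u => 0 < g u).card ≤ n →
      (∀ u, 0 ≤ g u) →
      (∀ t : ℝ, 0 ≤ t → (univ.filter fun u => t < g u ^ 2).Nonempty →
        c * ∑ u ∈ univ.filter (fun u => t < g u ^ 2), π u <
          ∑ u ∈ univ.filter (fun u => t < g u ^ 2),
            ∑ v ∈ (univ.filter (fun u => t < g u ^ 2))ᶜ, S u v) →
      (univ.filter fun u => 0 < g u).Nonempty →
      2 * c * ∑ u, g u ^ 2 * π u < ∑ u, ∑ v, S u v * |g u ^ 2 - g v ^ 2| := by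
  intro n
  induction n with
  | zero =>
    intro g hcard hg0 hyp hne
    exact absurd (Finset.card_eq_zero.mp (Nat.le_zero.mp hcard)) hne.ne_empty
  | succ n ih =>
    intro g hcard hg0 hyp hne
    obtain ⟨u₀, hu₀mem, hu₀min⟩ := Finset.exists_min_image _ g hne
    set β := g u₀ with hβdef
    have hβpos : 0 < β := (Finset.mem_filter.mp hu₀mem).2
    have hminp : ∀ u, 0 < g u → β ≤ g u := fun u hu =>
      hu₀min u (Finset.mem_filter.mpr ⟨Finset.mem_univ u, hu⟩)
    have hQ0 : (univ.filter fun u => (0:ℝ) < g u ^ 2) = univ.filter fun u => 0 < g u := by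
      apply Finset.filter_congr; intro u _
      constructor
      · intro h; by_contra hn
        have : g u = 0 := le_antisymm (not_lt.mp hn) (hg0 u)
        rw [this] at h; norm_num at h
      · intro h; positivity
    set g' : V → ℝ := fun u => Real.sqrt (max (g u ^ 2 - β ^ 2) 0) with hg'def
    have hg'sq : ∀ u, g' u ^ 2 = max (g u ^ 2 - β ^ 2) 0 := fun u =>
      Real.sq_sqrt (le_max_right _ _)
    have hg'0 : ∀ u, 0 ≤ g' u := fun u => Real.sqrt_nonneg _
    have hg'pos : ∀ u, 0 < g' u ↔ β < g u := by
      intro u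
      rw [hg'def]
      simp only [Real.sqrt_pos, lt_max_iff]
      constructor
      · rintro (h | h)
        · nlinarith [hg0 u, hβpos]
        · norm_num at h
      · intro h; left; nlinarith [hβpos]
    have hsupp' : (univ.filter fun u => 0 < g' u) = univ.filter fun u => β < g u := by
      apply Finset.filter_congr; intro u _; exact hg'pos u
    have hcard' : (univ.filter fun u => 0 < g' u).card ≤ n := by
      have hss : (univ.filter fun u => 0 < g' u) ⊂ univ.filter fun u => 0 < g u := by
        rw [hsupp']
        constructor
        · intro u hu
          simp only [Finset.mem_filter] at *
          exact ⟨hu.1, lt_trans hβpos hu.2⟩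
        · intro hsub
          have := hsub hu₀mem
          simp only [Finset.mem_filter] at this
          exact absurd this.2 (lt_irrefl β)
      have := Finset.card_lt_card hss
      omega
    have hlev : ∀ s : ℝ, 0 ≤ s →
        (univ.filter fun u => s < g' u ^ 2) = univ.filter fun u => s + β ^ 2 < g u ^ 2 := by
      intro s hs
      apply Finset.filter_congr; intro u _
      rw [hg'sq u, lt_max_iff]
      constructor
      · rintro (h | h)
        · linarith
        · linarith
      · intro h; left; linarith
    have hyp' : ∀ t : ℝ, 0 ≤ t → (univ.filter fun u => t < g' u ^ 2).Nonempty →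
        c * ∑ u ∈ univ.filter (fun u => t < g' u ^ 2), π u <
          ∑ u ∈ univ.filter (fun u => t < g' u ^ 2),
            ∑ v ∈ (univ.filter (fun u => t < g' u ^ 2))ᶜ, S u v := by
      intro t ht hne'
      rw [hlev t ht] at hne' ⊢
      exact hyp (t + β ^ 2) (by positivity) hne'
    set Qs := univ.filter fun u => 0 < g u with hQsdef
    have hpt : ∀ u, g' u ^ 2 * π u = g u ^ 2 * π u - (if 0 < g u then β ^ 2 * π u else 0) := by
      intro u
      by_cases h : 0 < g u
      · have hb : β ≤ g u := hminp u h
        have hm : max (g u ^ 2 - β ^ 2) 0 = g u ^ 2 - β ^ 2 := max_eq_left (by nlinarith)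
        rw [hg'sq, hm, if_pos h]; ring
      · have hg : g u = 0 := le_antisymm (not_lt.mp h) (hg0 u)
        have hm : max (g u ^ 2 - β ^ 2) 0 = 0 := max_eq_right (by nlinarith)
        rw [hg'sq, hm, if_neg h, hg]; ring
    have hsum' : ∑ u, g' u ^ 2 * π u = ∑ u, g u ^ 2 * π u - β ^ 2 * ∑ u ∈ Qs, π u := by
      rw [Finset.sum_congr rfl fun u _ => hpt u, Finset.sum_sub_distrib]
      congr 1
      rw [Finset.mul_sum, hQsdef, Finset.sum_filter]
    have habs : ∀ u v, |g u ^ 2 - g v ^ 2| = |g' u ^ 2 - g' v ^ 2|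
        + β ^ 2 * ((if 0 < g u then (1:ℝ) else 0) - (if 0 < g v then (1:ℝ) else 0)) ^ 2 := by
      intro u v
      by_cases hu : 0 < g u <;> by_cases hv : 0 < g v
      · have hbu := hminp u hu
        have hbv := hminp v hv
        rw [hg'sq, hg'sq, if_pos hu, if_pos hv,
          max_eq_left (show (0:ℝ) ≤ g u ^ 2 - β ^ 2 by nlinarith),
          max_eq_left (show (0:ℝ) ≤ g v ^ 2 - β ^ 2 by nlinarith),
          show g u ^ 2 - β ^ 2 - (g v ^ 2 - β ^ 2) = g u ^ 2 - g v ^ 2 by ring]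
        ring
      · have hbu := hminp u hu
        have hgv : g v = 0 := le_antisymm (not_lt.mp hv) (hg0 v)
        rw [hg'sq, hg'sq, if_pos hu, if_neg hv,
          max_eq_left (show (0:ℝ) ≤ g u ^ 2 - β ^ 2 by nlinarith),
          max_eq_right (show g v ^ 2 - β ^ 2 ≤ (0:ℝ) by nlinarith),
          abs_of_nonneg (show (0:ℝ) ≤ g u ^ 2 - g v ^ 2 by nlinarith),
          abs_of_nonneg (show (0:ℝ) ≤ g u ^ 2 - β ^ 2 - 0 by nlinarith),
          hgv]
        ring
      · have hbv := hminp v hv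
        have hgu : g u = 0 := le_antisymm (not_lt.mp hu) (hg0 u)
        rw [hg'sq, hg'sq, if_neg hu, if_pos hv,
          max_eq_right (show g u ^ 2 - β ^ 2 ≤ (0:ℝ) by nlinarith),
          max_eq_left (show (0:ℝ) ≤ g v ^ 2 - β ^ 2 by nlinarith),
          abs_of_nonpos (show g u ^ 2 - g v ^ 2 ≤ (0:ℝ) by nlinarith),
          abs_of_nonpos (show (0:ℝ) - (g v ^ 2 - β ^ 2) ≤ 0 by nlinarith),
          hgu]
        ring
      · have hgu : g u = 0 := le_antisymm (not_lt.mp hu) (hg0 u)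
        have hgv : g v = 0 := le_antisymm (not_lt.mp hv) (hg0 v)
        rw [hg'sq, hg'sq, if_neg hu, if_neg hv,
          max_eq_right (show g u ^ 2 - β ^ 2 ≤ (0:ℝ) by nlinarith),
          max_eq_right (show g v ^ 2 - β ^ 2 ≤ (0:ℝ) by nlinarith),
          hgu, hgv]
        simp
    have hA : ∑ u, ∑ v, S u v * |g u ^ 2 - g v ^ 2|
        = (∑ u, ∑ v, S u v * |g' u ^ 2 - g' v ^ 2|)
          + β ^ 2 * (2 * ∑ u ∈ Qs, ∑ v ∈ Qsᶜ, S u v) := by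
      rw [← ind_quad S hSs Qs]
      have : ∀ u v : V, S u v * |g u ^ 2 - g v ^ 2|
          = S u v * |g' u ^ 2 - g' v ^ 2|
            + β ^ 2 * (S u v * ((if u ∈ Qs then (1:ℝ) else 0) - (if v ∈ Qs then (1:ℝ) else 0)) ^ 2) := by
        intro u v
        have hu : (u ∈ Qs) = (0 < g u) := by simp [hQsdef]
        have hv : (v ∈ Qs) = (0 < g v) := by simp [hQsdef]
        rw [habs u v]
        simp only [hu, hv]
        ring
      rw [Finset.sum_congr rfl fun u _ => Finset.sum_congr rfl fun v _ => this u v]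
      simp only [Finset.sum_add_distrib, ← Finset.mul_sum]
    have h0 : c * ∑ u ∈ Qs, π u < ∑ u ∈ Qs, ∑ v ∈ Qsᶜ, S u v := by
      have := hyp 0 le_rfl (by rw [hQ0]; exact hne)
      rw [hQ0] at this
      exact this
    have hA'nonneg : (0:ℝ) ≤ ∑ u, ∑ v, S u v * |g' u ^ 2 - g' v ^ 2| :=
      Finset.sum_nonneg fun u _ => Finset.sum_nonneg fun v _ =>
        mul_nonneg (hS0 u v) (abs_nonneg _)
    have hstep : 2 * c * ∑ u, g' u ^ 2 * π u ≤ ∑ u, ∑ v, S u v * |g' u ^ 2 - g' v ^ 2| := by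
      by_cases hne' : (univ.filter fun u => 0 < g' u).Nonempty
      · exact (ih g' hcard' hg'0 hyp' hne').le
      · have hz : ∀ u, g' u = 0 := by
          intro u
          by_contra hnz
          have : 0 < g' u := lt_of_le_of_ne (hg'0 u) (Ne.symm hnz)
          exact hne' ⟨u, Finset.mem_filter.mpr ⟨Finset.mem_univ u, this⟩⟩
        have : ∑ u, g' u ^ 2 * π u = 0 := by
          apply Finset.sum_eq_zero; intro u _; rw [hz u]; ring
        rw [this, mul_zero]
        exact hA'nonneg
    have hβ2 : (0:ℝ) < β ^ 2 := by positivity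
    calc 2 * c * ∑ u, g u ^ 2 * π u
        = 2 * c * ∑ u, g' u ^ 2 * π u + 2 * β ^ 2 * (c * ∑ u ∈ Qs, π u) := by
          rw [hsum']; ring
      _ < (∑ u, ∑ v, S u v * |g' u ^ 2 - g' v ^ 2|)
          + 2 * β ^ 2 * ∑ u ∈ Qs, ∑ v ∈ Qsᶜ, S u v := by
          have h1 : 2 * β ^ 2 * (c * ∑ u ∈ Qs, π u) < 2 * β ^ 2 * ∑ u ∈ Qs, ∑ v ∈ Qsᶜ, S u v := by
            apply mul_lt_mul_of_pos_left h0 (by positivity)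
          linarith
      _ = ∑ u, ∑ v, S u v * |g u ^ 2 - g v ^ 2| := by rw [hA]; ring

lemma upper_aux (K : V → V → ℝ) (π : V → ℝ)
    (hK0 : ∀ u v, 0 ≤ K u v) (hK1 : ∀ u, ∑ v, K u v = 1)
    (hπ : ∀ u, 0 < π u) (hπ1 : ∑ u, π u = 1)
    (hstat : ∀ v, ∑ u, π u * K u v = π v)
    (lam : ℝ) (hlam0 : 0 ≤ lam) (f' : V → ℝ)
    (heig' : DeltaOp K π f' = fun u => lam * f' u)
    (hposne : (univ.filter fun u => 0 < f' u).Nonempty)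
    (hnegne : (univ.filter fun u => f' u < 0).Nonempty)
    (hhalf : ∑ u ∈ univ.filter (fun u => 0 < f' u), π u ≤ 1/2) :
    ∃ Q : Finset V, Q.Nonempty ∧ Q ≠ Finset.univ ∧
      dpart K π Q / (2 * pim π Q * (1 - pim π Q)) ≤ Real.sqrt (2 * lam) := by
  have hrow := symw_rowsum K π hK1 hstat
  have hcol := symw_colsum K π hK1 hstat
  have hS0 := symw_nonneg K π hK0 hπ
  have hSs := symw_symm K π
  set g : V → ℝ := fun u => max (f' u) 0 with hgdef
  have hg0 : ∀ u, 0 ≤ g u := fun u => le_max_right _ _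
  have hsupp : (univ.filter fun u => 0 < g u) = univ.filter fun u => 0 < f' u := by
    apply Finset.filter_congr; intro u _
    rw [hgdef]
    simp only [lt_max_iff]
    constructor
    · rintro (h | h)
      · exact h
      · norm_num at h
    · intro h; left; exact h
  set Ng : ℝ := ∑ u, g u ^ 2 * π u with hNgdef
  have hNg : 0 < Ng := by
    obtain ⟨u, hu⟩ := hposne
    have hu' : 0 < f' u := (Finset.mem_filter.mp hu).2
    have hgu : 0 < g u := lt_max_iff.mpr (Or.inl hu')
    apply Finset.sum_pos'
    · intro v _; have := (hπ v).le; positivity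
    · exact ⟨u, Finset.mem_univ u, by have := hπ u; positivity⟩
  -- the Dirichlet form bound for the positive part
  have hkey : (1/2) * ∑ u, ∑ v, symw K π u v * (g u - g v) ^ 2 ≤ lam * Ng := by
    rw [← quadform K π hπ g hrow hcol, bilform K π hπ g]
    have hpt : ∀ u, (1 - lam) * (g u ^ 2 * π u) ≤ g u * ∑ v, symw K π u v * g v := by
      intro u
      by_cases h : 0 < f' u
      · have hgu : g u = f' u := max_eq_left h.le
        have h1 : ∑ v, symw K π u v * f' v ≤ ∑ v, symw K π u v * g v :=
          Finset.sum_le_sum fun v _ => mul_le_mul_of_nonneg_left (le_max_left _ _) (hS0 u v)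
        have h2 : ∑ v, symw K π u v * f' v = (1 - lam) * (f' u * π u) := by
          have hd := delta_pi K π hπ f' u
          have he : DeltaOp K π f' u = lam * f' u := congrFun heig' u
          rw [he] at hd; linarith
        calc (1 - lam) * (g u ^ 2 * π u) = g u * ((1 - lam) * (f' u * π u)) := by
              rw [hgu]; ring
          _ = g u * ∑ v, symw K π u v * f' v := by rw [h2]
          _ ≤ g u * ∑ v, symw K π u v * g v :=
              mul_le_mul_of_nonneg_left h1 (by rw [hgu]; exact h.le)
      · have hgu : g u = 0 := max_eq_right (not_lt.mp h)
        rw [hgu]; simp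
    have hsum := Finset.sum_le_sum (fun u (_ : u ∈ univ) => hpt u)
    rw [← Finset.mul_sum] at hsum
    have hE : ∑ u, g u * ∑ v, symw K π u v * g v = ∑ u, ∑ v, symw K π u v * g u * g v := by
      apply Finset.sum_congr rfl; intro u _
      rw [Finset.mul_sum]; apply Finset.sum_congr rfl; intro v _; ring
    rw [hE] at hsum
    rw [← hNgdef]
    linarith
  -- Cauchy-Schwarz
  set A : ℝ := ∑ u, ∑ v, symw K π u v * |g u ^ 2 - g v ^ 2| with hAdef
  have hAnn : 0 ≤ A :=
    Finset.sum_nonneg fun u _ => Finset.sum_nonneg fun v _ =>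
      mul_nonneg (hS0 u v) (abs_nonneg _)
  have hCS : A ≤ 2 * Real.sqrt (2 * lam) * Ng := by
    set a : V × V → ℝ := fun p => Real.sqrt (symw K π p.1 p.2) * |g p.1 - g p.2| with hadef
    set b : V × V → ℝ := fun p => Real.sqrt (symw K π p.1 p.2) * (g p.1 + g p.2) with hbdef
    have hab : ∑ p ∈ univ ×ˢ univ, a p * b p = A := by
      rw [Finset.sum_product]
      apply Finset.sum_congr rfl; intro u _
      apply Finset.sum_congr rfl; intro v _
      rw [hadef, hbdef]
      have h1 : Real.sqrt (symw K π u v) * Real.sqrt (symw K π u v) = symw K π u v :=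
        Real.mul_self_sqrt (hS0 u v)
      have h2 : |g u - g v| * (g u + g v) = |g u ^ 2 - g v ^ 2| := by
        rw [show g u ^ 2 - g v ^ 2 = (g u - g v) * (g u + g v) by ring, abs_mul,
          abs_of_nonneg (by have := hg0 u; have := hg0 v; linarith : (0:ℝ) ≤ g u + g v)]
      calc Real.sqrt (symw K π u v) * |g u - g v| * (Real.sqrt (symw K π u v) * (g u + g v))
          = Real.sqrt (symw K π u v) * Real.sqrt (symw K π u v) * (|g u - g v| * (g u + g v)) := by
            ring
        _ = symw K π u v * |g u ^ 2 - g v ^ 2| := by rw [h1, h2]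
    have ha2 : ∑ p ∈ univ ×ˢ univ, a p ^ 2 = ∑ u, ∑ v, symw K π u v * (g u - g v) ^ 2 := by
      rw [Finset.sum_product]
      apply Finset.sum_congr rfl; intro u _
      apply Finset.sum_congr rfl; intro v _
      rw [hadef, mul_pow, Real.sq_sqrt (hS0 u v), sq_abs]
    have hb2 : ∑ p ∈ univ ×ˢ univ, b p ^ 2 = ∑ u, ∑ v, symw K π u v * (g u + g v) ^ 2 := by
      rw [Finset.sum_product]
      apply Finset.sum_congr rfl; intro u _
      apply Finset.sum_congr rfl; intro v _
      rw [hbdef, mul_pow, Real.sq_sqrt (hS0 u v)]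
    have hb2le : ∑ u, ∑ v, symw K π u v * (g u + g v) ^ 2 ≤ 4 * Ng := by
      have hpt : ∀ u v : V, symw K π u v * (g u + g v) ^ 2
          ≤ 2 * (symw K π u v * g u ^ 2) + 2 * (symw K π u v * g v ^ 2) := by
        intro u v
        nlinarith [hS0 u v, sq_nonneg (g u - g v), sq_nonneg (g u + g v)]
      calc ∑ u, ∑ v, symw K π u v * (g u + g v) ^ 2
          ≤ ∑ u, ∑ v, (2 * (symw K π u v * g u ^ 2) + 2 * (symw K π u v * g v ^ 2)) :=
            Finset.sum_le_sum fun u _ => Finset.sum_le_sum fun v _ => hpt u v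
        _ = 2 * (∑ u, ∑ v, symw K π u v * g u ^ 2) + 2 * ∑ u, ∑ v, symw K π u v * g v ^ 2 := by
            simp only [Finset.sum_add_distrib, ← Finset.mul_sum]
        _ = 4 * Ng := by
            have h1 : ∑ u, ∑ v, symw K π u v * g u ^ 2 = Ng := by
              apply Finset.sum_congr rfl; intro u _
              rw [← Finset.sum_mul, hrow u]; ring
            have h2 : ∑ u, ∑ v, symw K π u v * g v ^ 2 = Ng := by
              rw [Finset.sum_comm]
              apply Finset.sum_congr rfl; intro v _
              rw [← Finset.sum_mul, hcol v]; ring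
            rw [h1, h2]; ring
    have hD : ∑ u, ∑ v, symw K π u v * (g u - g v) ^ 2 ≤ 2 * lam * Ng := by linarith
    have hDnn : (0:ℝ) ≤ ∑ u, ∑ v, symw K π u v * (g u - g v) ^ 2 :=
      Finset.sum_nonneg fun u _ => Finset.sum_nonneg fun v _ =>
        mul_nonneg (hS0 u v) (sq_nonneg _)
    have hb2nn : (0:ℝ) ≤ ∑ u, ∑ v, symw K π u v * (g u + g v) ^ 2 :=
      Finset.sum_nonneg fun u _ => Finset.sum_nonneg fun v _ =>
        mul_nonneg (hS0 u v) (sq_nonneg _)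
    have hcs := Finset.sum_mul_sq_le_sq_mul_sq (univ ×ˢ univ) a b
    have hA2 : A ^ 2 ≤ 8 * lam * Ng ^ 2 := by
      rw [← hab]
      calc (∑ p ∈ univ ×ˢ univ, a p * b p) ^ 2
          ≤ (∑ p ∈ univ ×ˢ univ, a p ^ 2) * ∑ p ∈ univ ×ˢ univ, b p ^ 2 := hcs
        _ ≤ (2 * lam * Ng) * (4 * Ng) := by
            rw [ha2, hb2]
            apply mul_le_mul hD hb2le hb2nn
            positivity
        _ = 8 * lam * Ng ^ 2 := by ring
    have hR : (2 * Real.sqrt (2 * lam) * Ng) ^ 2 = 8 * lam * Ng ^ 2 := by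
      have hsq : Real.sqrt (2 * lam) ^ 2 = 2 * lam := Real.sq_sqrt (by linarith)
      nlinarith [hsq]
    have hRnn : (0:ℝ) ≤ 2 * Real.sqrt (2 * lam) * Ng := by
      have := Real.sqrt_nonneg (2 * lam); positivity
    calc A = Real.sqrt (A ^ 2) := (Real.sqrt_sq hAnn).symm
      _ ≤ Real.sqrt ((2 * Real.sqrt (2 * lam) * Ng) ^ 2) := by
          apply Real.sqrt_le_sqrt; rw [hR]; exact hA2
      _ = 2 * Real.sqrt (2 * lam) * Ng := Real.sqrt_sq hRnn
  -- extract the sweep cut by contradiction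
  by_contra hcon
  push_neg at hcon
  have hsweep_hyp : ∀ t : ℝ, 0 ≤ t → (univ.filter fun u => t < g u ^ 2).Nonempty →
      Real.sqrt (2 * lam) * ∑ u ∈ univ.filter (fun u => t < g u ^ 2), π u <
        ∑ u ∈ univ.filter (fun u => t < g u ^ 2),
          ∑ v ∈ (univ.filter (fun u => t < g u ^ 2))ᶜ, symw K π u v := by
    intro t ht hne'
    set Q := univ.filter fun u => t < g u ^ 2 with hQdef
    have hQsub : Q ⊆ univ.filter fun u => 0 < f' u := by
      intro u hu
      rw [hQdef] at hu
      have hu' : t < g u ^ 2 := (Finset.mem_filter.mp hu).2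
      have : 0 < g u := by
        rcases lt_or_eq_of_le (hg0 u) with h | h
        · exact h
        · exfalso; rw [← h] at hu'; simp at hu'; linarith
      rw [← hsupp]
      exact Finset.mem_filter.mpr ⟨Finset.mem_univ u, this⟩
    have hQproper : Q ≠ univ := by
      obtain ⟨w, hw⟩ := hnegne
      have hw' : f' w < 0 := (Finset.mem_filter.mp hw).2
      intro h
      have : w ∈ Q := h ▸ Finset.mem_univ w
      have := (Finset.mem_filter.mp (hQsub this)).2
      linarith
    have hpimpos : 0 < pim π Q := Finset.sum_pos (fun u _ => hπ u) hne'
    have hpimhalf : pim π Q ≤ 1/2 := by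
      refine le_trans ?_ hhalf
      exact Finset.sum_le_sum_of_subset_of_nonneg hQsub fun u _ _ => (hπ u).le
    have hdenpos : 0 < 2 * pim π Q * (1 - pim π Q) := by nlinarith
    have hc := hcon Q hne' hQproper
    rw [lt_div_iff₀ hdenpos] at hc
    have hmono : Real.sqrt (2 * lam) * pim π Q
        ≤ Real.sqrt (2 * lam) * (2 * pim π Q * (1 - pim π Q)) := by
      apply mul_le_mul_of_nonneg_left _ (Real.sqrt_nonneg _)
      nlinarith
    have hd := dpart_eq_symw K π hK1 hstat Q
    calc Real.sqrt (2 * lam) * ∑ u ∈ Q, π u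
        = Real.sqrt (2 * lam) * pim π Q := rfl
      _ ≤ Real.sqrt (2 * lam) * (2 * pim π Q * (1 - pim π Q)) := hmono
      _ < dpart K π Q := hc
      _ = ∑ u ∈ Q, ∑ v ∈ Qᶜ, symw K π u v := hd
  have hsuppne : (univ.filter fun u => 0 < g u).Nonempty := by rw [hsupp]; exact hposne
  have hfin := sweep_lemma (symw K π) π hS0 hSs (fun u => (hπ u).le)
    (Real.sqrt (2 * lam)) (Real.sqrt_nonneg _)
    (univ.filter fun u => 0 < g u).card g le_rfl hg0 hsweep_hyp hsuppne
  rw [← hNgdef, ← hAdef] at hfin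
  linarith

end CheegerAux

theorem classical_cheeger_inequality {V : Type*} [Fintype V] [DecidableEq V]
    (K : V → V → ℝ) (π : V → ℝ)
    (hK0 : ∀ u v, 0 ≤ K u v) (hK1 : ∀ u, ∑ v, K u v = 1)
    (hπ : ∀ u, 0 < π u) (hπ1 : ∑ u, π u = 1)
    (hstat : ∀ v, ∑ u, π u * K u v = π v)
    (hirr : ∀ Q : Finset V, Q.Nonempty → Q ≠ Finset.univ → 0 < dpart K π Q)
    (lam : ℝ) (f : V → ℝ) (hf0 : f ≠ 0)
    (hforth : ∑ u, f u * π u = 0)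
    (heig : DeltaOp K π f = fun u => lam * f u)
    (hmin : ∀ g : V → ℝ, g ≠ 0 → (∑ u, g u * π u = 0) →
      lam * ∑ u, (g u) ^ 2 * π u ≤ ∑ u, DeltaOp K π g u * g u * π u) :
    lam / 2 ≤ iota2 K π ∧ iota2 K π ≤ Real.sqrt (2 * lam) := by
  have hrow := symw_rowsum K π hK1 hstat
  have hcol := symw_colsum K π hK1 hstat
  have hS0 := symw_nonneg K π hK0 hπ
  have hSs := symw_symm K π
  obtain ⟨u₁, hu₁⟩ : ∃ u, f u ≠ 0 := Function.ne_iff.mp hf0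
  -- there are at least two vertices
  have htwo : ∃ w : V, w ≠ u₁ := by
    by_contra h
    push_neg at h
    have huniv : (Finset.univ : Finset V) = {u₁} := by
      ext w; simp [h w]
    have h0 : f u₁ * π u₁ = 0 := by
      rw [huniv, Finset.sum_singleton] at hforth; exact hforth
    exact hu₁ ((mul_eq_zero.mp h0).resolve_right (hπ u₁).ne')
  obtain ⟨w₁, hw₁⟩ := htwo
  -- basic facts about the Cheeger set
  have hpim_pos : ∀ Q : Finset V, Q.Nonempty → 0 < pim π Q :=
    fun Q hQ => Finset.sum_pos (fun u _ => hπ u) hQ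
  have hpim_lt1 : ∀ Q : Finset V, Q ≠ Finset.univ → pim π Q < 1 := by
    intro Q hQ
    have hcne : Qᶜ.Nonempty := by
      by_contra hc
      rw [Finset.not_nonempty_iff_eq_empty, Finset.compl_eq_empty_iff] at hc
      exact hQ hc
    have hsum := Finset.sum_add_sum_compl Q π
    rw [hπ1] at hsum
    have hpos : 0 < ∑ u ∈ Qᶜ, π u := Finset.sum_pos (fun u _ => hπ u) hcne
    unfold pim
    linarith
  have hdenom_pos : ∀ Q : Finset V, Q.Nonempty → Q ≠ Finset.univ →
      0 < 2 * pim π Q * (1 - pim π Q) := by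
    intro Q h1 h2
    have := hpim_pos Q h1
    have := hpim_lt1 Q h2
    nlinarith
  set Sset : Set ℝ := {x : ℝ | ∃ Q : Finset V, Q.Nonempty ∧ Q ≠ Finset.univ ∧
    x = dpart K π Q / (2 * pim π Q * (1 - pim π Q))} with hSsetdef
  have hmem_nonneg : ∀ x ∈ Sset, (0:ℝ) ≤ x := by
    rintro x ⟨Q, h1, h2, rfl⟩
    apply div_nonneg _ (hdenom_pos Q h1 h2).le
    apply Finset.sum_nonneg; intro u _
    apply Finset.sum_nonneg; intro v _
    exact mul_nonneg (hK0 u v) (hπ u).le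
  have hbdd : BddBelow Sset := ⟨0, fun x hx => hmem_nonneg x hx⟩
  have hSne : Sset.Nonempty := by
    refine ⟨_, {u₁}, Finset.singleton_nonempty u₁, ?_, rfl⟩
    intro h
    have : w₁ ∈ ({u₁} : Finset V) := h ▸ Finset.mem_univ w₁
    exact hw₁ (Finset.mem_singleton.mp this)
  have hiota : iota2 K π = sInf Sset := rfl
  constructor
  · -- lower bound
    rw [hiota]
    apply le_csInf hSne
    rintro x ⟨Q, hQne, hQproper, rfl⟩
    set c : ℝ := pim π Q with hcdef
    have hc0 : 0 < c := hpim_pos Q hQne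
    have hc1 : c < 1 := hpim_lt1 Q hQproper
    set g : V → ℝ := fun u => (if u ∈ Q then (1:ℝ) else 0) - c with hgdef
    have hgorth : ∑ u, g u * π u = 0 := by
      have hpt : ∀ u : V, g u * π u = (if u ∈ Q then π u else 0) - c * π u := by
        intro u; by_cases h : u ∈ Q <;> simp [hgdef, h] <;> ring
      rw [Finset.sum_congr rfl fun u _ => hpt u, Finset.sum_sub_distrib,
        Finset.sum_ite_mem, Finset.univ_inter, ← Finset.mul_sum, hπ1, hcdef]
      unfold pim; ring
    have hgne : g ≠ 0 := by
      intro h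
      obtain ⟨u, hu⟩ := hQne
      have h2 := congrFun h u
      have h3 : (1:ℝ) - c = 0 := by simpa [hgdef, hu] using h2
      linarith
    have hnorm : ∑ u, g u ^ 2 * π u = c * (1 - c) := by
      have hpt : ∀ u : V, g u ^ 2 * π u
          = (if u ∈ Q then (1 - 2 * c) * π u else 0) + c ^ 2 * π u := by
        intro u; by_cases h : u ∈ Q <;> simp [hgdef, h] <;> ring
      rw [Finset.sum_congr rfl fun u _ => hpt u, Finset.sum_add_distrib,
        Finset.sum_ite_mem, Finset.univ_inter, ← Finset.mul_sum, ← Finset.mul_sum, hπ1]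
      have : ∑ u ∈ Q, π u = c := rfl
      rw [this]; ring
    have hdiff : ∀ u v : V, g u - g v
        = (if u ∈ Q then (1:ℝ) else 0) - (if v ∈ Q then (1:ℝ) else 0) := by
      intro u v; rw [hgdef]; ring
    have hqq : ∑ u, DeltaOp K π g u * g u * π u = dpart K π Q := by
      rw [quadform K π hπ g hrow hcol,
        Finset.sum_congr rfl fun u _ => Finset.sum_congr rfl fun v _ => by rw [hdiff u v],
        ind_quad (symw K π) hSs Q, dpart_eq_symw K π hK1 hstat Q]
      ring
    have hm := hmin g hgne hgorth
    rw [hqq, hnorm] at hm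
    rw [le_div_iff₀ (hdenom_pos Q hQne hQproper)]
    nlinarith [hm]
  · -- upper bound
    have hfn : 0 < ∑ u, f u ^ 2 * π u := by
      apply Finset.sum_pos'
      · intro u _; have := (hπ u).le; positivity
      · exact ⟨u₁, Finset.mem_univ u₁, by have := hπ u₁; positivity⟩
    have hDf : ∑ u, DeltaOp K π f u * f u * π u = lam * ∑ u, f u ^ 2 * π u := by
      rw [Finset.mul_sum]
      apply Finset.sum_congr rfl; intro u _
      rw [congrFun heig u]; ring
    have hDnn : 0 ≤ ∑ u, DeltaOp K π f u * f u * π u := by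
      rw [quadform K π hπ f hrow hcol]
      apply mul_nonneg (by norm_num)
      apply Finset.sum_nonneg; intro u _
      apply Finset.sum_nonneg; intro v _
      exact mul_nonneg (hS0 u v) (sq_nonneg _)
    have hlam0 : 0 ≤ lam := by
      rw [hDf] at hDnn; nlinarith
    -- both sign classes are nonempty
    have hposne : (univ.filter fun u => 0 < f u).Nonempty := by
      by_contra h
      rw [Finset.not_nonempty_iff_eq_empty, Finset.filter_eq_empty_iff] at h
      have hnn : ∀ u ∈ (univ : Finset V), 0 ≤ -(f u * π u) := by
        intro u _
        have := not_lt.mp (h (Finset.mem_univ u))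
        have := (hπ u).le
        nlinarith
      have hzero : ∑ u, -(f u * π u) = 0 := by
        rw [Finset.sum_neg_distrib, hforth, neg_zero]
      have hall := (Finset.sum_eq_zero_iff_of_nonneg hnn).mp hzero
      apply hu₁
      have := hall u₁ (Finset.mem_univ u₁)
      have hπ1' := (hπ u₁).ne'
      have : f u₁ * π u₁ = 0 := by linarith
      exact (mul_eq_zero.mp this).resolve_right hπ1'
    have hnegne : (univ.filter fun u => f u < 0).Nonempty := by
      by_contra h
      rw [Finset.not_nonempty_iff_eq_empty, Finset.filter_eq_empty_iff] at h
      have hnn : ∀ u ∈ (univ : Finset V), 0 ≤ f u * π u := by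
        intro u _
        have := not_lt.mp (h (Finset.mem_univ u))
        have := (hπ u).le
        nlinarith
      have hall := (Finset.sum_eq_zero_iff_of_nonneg hnn).mp hforth
      apply hu₁
      have := hall u₁ (Finset.mem_univ u₁)
      exact (mul_eq_zero.mp this).resolve_right (hπ u₁).ne'
    -- positive and negative parts have disjoint mass summing to ≤ 1
    have hPN : (∑ u ∈ univ.filter (fun u => 0 < f u), π u)
        + (∑ u ∈ univ.filter (fun u => f u < 0), π u) ≤ 1 := by
      have hdisj : Disjoint (univ.filter fun u => 0 < f u) (univ.filter fun u => f u < 0) := by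
        rw [Finset.disjoint_left]
        intro u h1 h2
        have := (Finset.mem_filter.mp h1).2
        have := (Finset.mem_filter.mp h2).2
        linarith
      rw [← Finset.sum_union hdisj]
      rw [← hπ1]
      apply Finset.sum_le_sum_of_subset_of_nonneg (Finset.subset_univ _)
      intro u _ _; exact (hπ u).le
    -- choose the sign so the positive part has mass ≤ 1/2
    have hexQ : ∃ Q : Finset V, Q.Nonempty ∧ Q ≠ Finset.univ ∧
        dpart K π Q / (2 * pim π Q * (1 - pim π Q)) ≤ Real.sqrt (2 * lam) := by
      rcases le_or_gt (∑ u ∈ univ.filter (fun u => 0 < f u), π u) (1/2) with hhalf | hhalf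
      · exact upper_aux K π hK0 hK1 hπ hπ1 hstat lam hlam0 f heig hposne hnegne hhalf
      · set f' : V → ℝ := fun u => -f u with hf'def
        have heig' : DeltaOp K π f' = fun u => lam * f' u := by
          funext u
          have h := congrFun heig u
          unfold DeltaOp at h ⊢
          rw [hf'def]
          simp only [mul_neg, Finset.sum_neg_distrib, neg_div] at *
          linarith [h]
        have hposeq : (univ.filter fun u => 0 < f' u) = univ.filter fun u => f u < 0 := by
          apply Finset.filter_congr; intro u _
          rw [hf'def]; simp
        have hnegeq : (univ.filter fun u => f' u < 0) = univ.filter fun u => 0 < f u := by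
          apply Finset.filter_congr; intro u _
          rw [hf'def]; simp
        have hposne' : (univ.filter fun u => 0 < f' u).Nonempty := by
          rw [hposeq]; exact hnegne
        have hnegne' : (univ.filter fun u => f' u < 0).Nonempty := by
          rw [hnegeq]; exact hposne
        have hhalf' : ∑ u ∈ univ.filter (fun u => 0 < f' u), π u ≤ 1/2 := by
          rw [hposeq]; linarith
        exact upper_aux K π hK0 hK1 hπ hπ1 hstat lam hlam0 f' heig' hposne' hnegne' hhalf'
    obtain ⟨Q, hQ1, hQ2, hQ3⟩ := hexQ
    rw [hiota]
    exact le_trans (csInf_le hbdd ⟨Q, hQ1, hQ2, rfl⟩) hQ3
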